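/- Let V be a symmetric positive definite real d×d matrix, let c > 0, and let L : ℝ^d → ℝ be differentiable with gradient ∇L satisfying the V-strong monotonicity condition ⟨∇L(θ₁) − ∇L(θ₂), θ₁ − θ₂⟩ ≥ c·‖θ₁ − θ₂‖_V² for all θ₁, θ₂ ∈ ℝ^d. If θ̂ ∈ ℝ^d satisfies ∇L(θ̂) = 0, then for every θ* ∈ ℝ^d, ‖θ̂ − θ*‖_V ≤ (1/c)·‖∇L(θ*)‖_{V⁻¹}. -/

import Mathlib

/-- Euclidean dot product on `ℝ^d`. -/
def dotp {d : ℕ} (v w : Fin d → ℝ) : ℝ := ∑ i, v i * w i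

/-- The Mahalanobis-type norm `‖u‖_V = √(uᵀ V u)` associated with a matrix `V`. -/
noncomputable def normV {d : ℕ} (V : Matrix (Fin d) (Fin d) ℝ) (u : Fin d → ℝ) : ℝ :=
  Real.sqrt (dotp u (V.mulVec u))

lemma dotp_eq_dotProduct {d : ℕ} (v w : Fin d → ℝ) : dotp v w = dotProduct v w := rfl

lemma sym_swap {d : ℕ} (A : Matrix (Fin d) (Fin d) ℝ) (hA : A.IsHermitian) (v u : Fin d → ℝ) :
    dotProduct v (A.mulVec u) = dotProduct (A.mulVec v) u := by
  rw [Matrix.dotProduct_mulVec, ← Matrix.mulVec_transpose, show Matrix.transpose A = A from hA]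

lemma cs_lemma {d : ℕ} (V : Matrix (Fin d) (Fin d) ℝ) (hV : V.PosDef) (w u : Fin d → ℝ) :
    dotp w u ≤ normV V⁻¹ w * normV V u := by
  have hVinv := hV.inv
  set A := dotp u (V.mulVec u) with hAdef
  set C := dotp w ((V⁻¹).mulVec w) with hCdef
  set B := dotp w u with hBdef
  have hA0 : 0 ≤ A := hV.posSemidef.dotProduct_mulVec_nonneg u
  have hC0 : 0 ≤ C := hVinv.posSemidef.dotProduct_mulVec_nonneg w
  have hVVinv : V * V⁻¹ = 1 := Matrix.mul_nonsing_inv V (isUnit_iff_ne_zero.mpr hV.det_pos.ne')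
  have key : ∀ t : ℝ, 0 ≤ A - 2*t*B + t^2*C := by
    intro t
    set y := (V⁻¹).mulVec w with hy
    have h1 : V.mulVec y = w := by
      rw [hy, Matrix.mulVec_mulVec, hVVinv, Matrix.one_mulVec]
    have h2 : (0:ℝ) ≤ dotp (u - t • y) (V.mulVec (u - t • y)) := hV.posSemidef.dotProduct_mulVec_nonneg _
    have h3 : V.mulVec (u - t • y) = V.mulVec u - t • w := by
      rw [Matrix.mulVec_sub, Matrix.mulVec_smul, h1]
    rw [h3] at h2
    rw [dotp_eq_dotProduct] at h2
    rw [sub_dotProduct, dotProduct_sub, dotProduct_sub,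
      smul_dotProduct, smul_dotProduct, dotProduct_smul,
      dotProduct_smul] at h2
    have e1 : dotProduct y (V.mulVec u) = B := by
      rw [sym_swap V hV.isHermitian, h1, hBdef, dotp_eq_dotProduct]
    have e2 : dotProduct u w = B := by
      rw [hBdef, dotp_eq_dotProduct, dotProduct_comm]
    have e3 : dotProduct y w = C := by
      rw [hy, dotProduct_comm, hCdef, dotp_eq_dotProduct]
    rw [e1, e2, e3] at h2
    simp only [smul_eq_mul] at h2
    have e4 : dotProduct u (V.mulVec u) = A := rfl
    rw [e4] at h2
    nlinarith [h2]
  have hBle : B ≤ Real.sqrt C * Real.sqrt A := by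
    rcases le_or_gt B 0 with hB | hB
    · exact hB.trans (mul_nonneg (Real.sqrt_nonneg _) (Real.sqrt_nonneg _))
    · rcases eq_or_lt_of_le hC0 with hC | hC
      · exfalso
        have := key ((A+1)/(2*B))
        rw [← hC] at this
        have h2B : (0:ℝ) < 2*B := by linarith
        have : (0:ℝ) ≤ A - (A+1) := by
          have heq : 2*((A+1)/(2*B))*B = A+1 := by field_simp
          nlinarith [this]
        linarith
      · have := key (B/C)
        have hB2 : B^2 ≤ A * C := by
          have heq : A - 2*(B/C)*B + (B/C)^2*C = A - B^2/C := by field_simp; ring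
          rw [heq] at this
          have := (div_le_iff₀ hC).mp (by linarith : B^2/C ≤ A)
          linarith
        calc B ≤ Real.sqrt (B^2) := by rw [Real.sqrt_sq hB.le]
          _ ≤ Real.sqrt (A * C) := Real.sqrt_le_sqrt hB2
          _ = Real.sqrt C * Real.sqrt A := by
              rw [Real.sqrt_mul hA0, mul_comm]
  exact hBle

theorem mle_estimation_error_bound
    (d : ℕ) (V : Matrix (Fin d) (Fin d) ℝ) (hV : V.PosDef)
    (c : ℝ) (hc : 0 < c)
    (L : (Fin d → ℝ) → ℝ) (g : (Fin d → ℝ) → Fin d → ℝ)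
    (hdiff : Differentiable ℝ L)
    (hgrad : ∀ θ u : Fin d → ℝ, fderiv ℝ L θ u = dotp (g θ) u)
    (hmono : ∀ θ₁ θ₂ : Fin d → ℝ,
      c * (normV V (θ₁ - θ₂)) ^ 2 ≤ dotp (g θ₁ - g θ₂) (θ₁ - θ₂))
    (θhat θstar : Fin d → ℝ) (hcrit : g θhat = 0) :
    normV V (θhat - θstar) ≤ (1 / c) * normV V⁻¹ (g θstar) := by
  set N := normV V (θhat - θstar) with hN
  set M := normV V⁻¹ (g θstar) with hM
  have hN0 : 0 ≤ N := Real.sqrt_nonneg _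
  have hM0 : 0 ≤ M := Real.sqrt_nonneg _
  have h := hmono θhat θstar
  rw [hcrit, zero_sub] at h
  have hcs : dotp (-(g θstar)) (θhat - θstar) ≤ normV V⁻¹ (-(g θstar)) * N :=
    cs_lemma V hV _ _
  have hneg : normV V⁻¹ (-(g θstar)) = M := by
    rw [hM]
    unfold normV
    rw [Matrix.mulVec_neg, dotp_eq_dotProduct, dotp_eq_dotProduct,
      neg_dotProduct, dotProduct_neg, neg_neg]
  rw [hneg] at hcs
  have hmain : c * N^2 ≤ M * N := le_trans h hcs
  rcases eq_or_lt_of_le hN0 with hNz | hNpos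
  · rw [← hNz]
    positivity
  · have hcN : c * N ≤ M := by
      have : (c * N) * N ≤ M * N := by nlinarith
      exact le_of_mul_le_mul_right this hNpos
    rw [show (1/c) * M = M / c by ring, le_div_iff₀ hc]
    nlinarith
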